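/- Let X be a metrizable space and Y ⊆ X a scattered subspace whose Cantor–Bendixson height is countable. Then Y is a G_δ subset of X. In particular, every scattered subspace of a separable metrizable space is G_δ. -/

import Mathlib

open Set

variable {X : Type*} [TopologicalSpace X]

/-- The Cantor–Bendixson derivative of a subspace: the set of points of `Y`
which are not isolated in `Y` (with its subspace topology). -/
def cbDeriv (Y : Set X) : Set X :=
  {y ∈ Y | ∀ U : Set X, IsOpen U → y ∈ U → ∃ z ∈ U ∩ Y, z ≠ y}

/-- Iterated Cantor–Bendixson derivatives: `Y^(0) = Y`, `Y^(α+1) = cbDeriv (Y^(α))`,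
intersections at limits. -/
noncomputable def cbIter (Y : Set X) (o : Ordinal) : Set X :=
  Ordinal.limitRecOn o Y (fun _ ih => cbDeriv ih)
    (fun o _ ih => ⋂ (o' : Ordinal) (h : o' < o), ih o' h)


theorem cbIter_zero (Y : Set X) : cbIter Y 0 = Y := Ordinal.limitRecOn_zero ..

theorem cbIter_succ (Y : Set X) (o : Ordinal) :
    cbIter Y (o + 1) = cbDeriv (cbIter Y o) := by
  have := Ordinal.limitRecOn_succ (motive := fun _ => Set X) o Y
    (fun _ ih => cbDeriv ih) (fun o _ ih => ⋂ (o' : Ordinal) (h : o' < o), ih o' h)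
  simpa [cbIter, Order.succ] using this

theorem cbIter_limit (Y : Set X) {o : Ordinal} (ho : Order.IsSuccLimit o) :
    cbIter Y o = ⋂ (o' : Ordinal) (_ : o' < o), cbIter Y o' :=
  Ordinal.limitRecOn_limit _ _ _ _ ho

theorem cbDeriv_subset (Y : Set X) : cbDeriv Y ⊆ Y := sep_subset _ _

theorem cbIter_antitone (Y : Set X) : ∀ {α β : Ordinal}, α ≤ β → cbIter Y β ⊆ cbIter Y α := by
  intro α β
  induction β using Ordinal.induction with
  | h β IH =>
    intro hαβ
    rcases eq_or_lt_of_le hαβ with rfl | hlt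
    · exact subset_rfl
    rcases Ordinal.zero_or_succ_or_isSuccLimit β with rfl | ⟨γ, rfl⟩ | hβ
    · exact absurd hlt not_lt_zero
    · rw [show Order.succ γ = γ + 1 from rfl, cbIter_succ]
      exact (cbDeriv_subset _).trans (IH γ (Order.lt_succ γ) (Order.lt_succ_iff.mp hlt))
    · rw [cbIter_limit Y hβ]
      exact iInter₂_subset α hlt

/-- a scattered subspace of a metrizable space whose
Cantor–Bendixson height is countable is a `G_δ` subset. -/
theorem stmt5 [TopologicalSpace.MetrizableSpace X] (Y : Set X)
    (hscat : ∀ A : Set X, A ⊆ Y → A.Nonempty →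
      ∃ a ∈ A, ∃ U : Set X, IsOpen U ∧ U ∩ A = {a})
    (hheight : ∃ α : Ordinal, α < (Cardinal.aleph 1).ord ∧ cbIter Y α = ∅) :
    IsGδ Y := by
  letI : MetricSpace X := TopologicalSpace.metrizableSpaceMetric X
  obtain ⟨h0, -, hh0⟩ := hheight
  -- rank
  set rk : X → Ordinal := fun y => sInf {β | y ∉ cbIter Y (β + 1)} with hrk
  have hne : ∀ y : X, {β | y ∉ cbIter Y (β + 1)}.Nonempty := by
    intro y
    refine ⟨h0, ?_⟩
    show y ∉ cbIter Y (h0 + 1)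
    rw [cbIter_succ]
    intro hy
    exact absurd (cbDeriv_subset _ hy) (by rw [hh0]; exact notMem_empty y)
  have hrk_notmem : ∀ y : X, y ∉ cbIter Y (rk y + 1) := fun y => csInf_mem (hne y)
  have hrk_mem : ∀ y ∈ Y, y ∈ cbIter Y (rk y) := by
    intro y hy
    by_contra hc
    rcases Ordinal.zero_or_succ_or_isSuccLimit (rk y) with h | ⟨γ, hγ'⟩ | hl
    · rw [h, cbIter_zero] at hc; exact hc hy
    · have hγ := hγ'.symm
      have hγlt : γ < rk y := by rw [hγ]; exact Order.lt_succ γ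
      have : γ ∈ {β | y ∉ cbIter Y (β + 1)} := by
        simpa [Set.mem_setOf_eq, hγ, Order.succ_eq_add_one] using hc
      exact absurd (csInf_le (OrderBot.bddBelow _) this) (not_le_of_gt hγlt)
    · rw [cbIter_limit Y hl] at hc
      simp only [mem_iInter, not_forall] at hc
      obtain ⟨ξ, hξlt, hξ⟩ := hc
      have : ξ ∈ {β | y ∉ cbIter Y (β + 1)} := by
        intro hmem
        exact hξ (cbIter_antitone Y (Order.le_succ ξ) hmem)
      exact absurd (csInf_le (OrderBot.bddBelow _) this) (not_le_of_gt hξlt)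
  -- choose epsilons
  have key : ∀ y : X, ∃ ε : ℝ, 0 < ε ∧
      (y ∈ Y → ∀ z ∈ Metric.ball y ε ∩ cbIter Y (rk y), z = y) := by
    intro y
    by_cases hy : y ∈ Y
    · have h1 := hrk_notmem y
      rw [cbIter_succ] at h1
      have h2 := hrk_mem y hy
      simp only [cbDeriv, Set.mem_sep_iff, not_and, not_forall] at h1
      obtain ⟨U, hUopen, hyU, hU⟩ := h1 h2
      push_neg at hU
      obtain ⟨ε, hεpos, hball⟩ := Metric.isOpen_iff.mp hUopen y hyU
      exact ⟨ε, hεpos, fun _ z hz => hU z ⟨hball hz.1, hz.2⟩⟩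
    · exact ⟨1, one_pos, fun h => absurd h hy⟩
  choose ε hεpos hεspec using key
  -- the Gδ representation
  have hrep : Y = ⋂ n : ℕ, ⋃ y ∈ Y, Metric.ball y (min (ε y) (1 / (n + 1)) / 2) := by
    apply Subset.antisymm
    · intro y hy
      refine mem_iInter.mpr fun n => mem_biUnion hy ?_
      exact Metric.mem_ball_self (half_pos (lt_min (hεpos y) (by positivity)))
    · intro x hx
      by_contra hxY
      simp only [mem_iInter, mem_iUnion] at hx
      -- the witnesses
      have hw : ∀ n : ℕ, ∃ y ∈ Y, dist x y < ε y / 2 ∧ dist x y < 1 / (n + 1) / 2 := by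
        intro n
        obtain ⟨y, hy, hball⟩ := hx n
        rw [Metric.mem_ball] at hball
        refine ⟨y, hy, ?_, ?_⟩
        · have h1 : min (ε y) (1 / ((n : ℝ) + 1)) ≤ ε y := min_le_left _ _
          linarith
        · have h1 : min (ε y) (1 / ((n : ℝ) + 1)) ≤ 1 / ((n : ℝ) + 1) := min_le_right _ _
          linarith
      -- minimal rank among close witnesses
      set S : Set Ordinal := {β | ∃ y ∈ Y, rk y = β ∧ dist x y < ε y / 2} with hS
      have hSne : S.Nonempty := by
        obtain ⟨y, hy, h1, -⟩ := hw 0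
        exact ⟨rk y, y, hy, rfl, h1⟩
      obtain ⟨y, hyY, hyrk, hyd⟩ := csInf_mem hSne
      have hdist_pos : 0 < dist x y := by
        rw [dist_pos]; rintro rfl; exact hxY hyY
      -- pick n large
      obtain ⟨n, hn⟩ := exists_nat_one_div_lt (lt_min hdist_pos (hεpos y) : (0:ℝ) < min (dist x y) (ε y))
      obtain ⟨y', hy'Y, hy'1, hy'2⟩ := hw n
      have hy'd : dist x y' < min (dist x y) (ε y) / 2 := by
        calc dist x y' < 1 / (n + 1) / 2 := hy'2
        _ < min (dist x y) (ε y) / 2 := by linarith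
      have hy'ne : y' ≠ y := by
        rintro rfl
        have : dist x y' < dist x y' := by
          calc dist x y' < min (dist x y') (ε y') / 2 := hy'd
          _ ≤ dist x y' / 2 := by have := min_le_left (dist x y') (ε y'); linarith
          _ < dist x y' := by linarith
        exact lt_irrefl _ this
      have hy'rk : rk y ≤ rk y' := by
        rw [hyrk]
        exact csInf_le (OrderBot.bddBelow _) ⟨y', hy'Y, rfl, hy'1⟩
      have hy'mem : y' ∈ cbIter Y (rk y) :=
        cbIter_antitone Y hy'rk (hrk_mem y' hy'Y)
      have hy'ball : y' ∈ Metric.ball y (ε y) := by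
        rw [Metric.mem_ball]
        calc dist y' y ≤ dist y' x + dist x y := dist_triangle _ _ _
        _ < ε y / 2 + ε y / 2 := by
            have h1 : dist y' x = dist x y' := dist_comm _ _
            have h2 : min (dist x y) (ε y) ≤ ε y := min_le_right _ _
            linarith
        _ = ε y := by ring
      exact hy'ne (hεspec y hyY y' ⟨hy'ball, hy'mem⟩)
  rw [hrep]
  exact .iInter fun n => (isOpen_biUnion fun y _ => Metric.isOpen_ball).isGδ
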